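/- Let n ≥ 5 be odd, n = 2m+1, and let G be C_n together with vertices w_1,…,w_n where w_i is adjacent exactly to v_i and v_{i+1} (indices mod n). Then the set {w_n, v_2, v_4, …, v_{2m}} is an independent set of G intersecting every maximum clique, and each vertex of this set lies in some maximum clique. -/

import Mathlib

open SimpleGraph Finset

variable {V : Type} [Fintype V] [DecidableEq V]

/-- `s` is an independent set of `G`: pairwise non-adjacent vertices. -/
def IsIndepSet' (G : SimpleGraph V) (s : Set V) : Prop :=
  s.Pairwise fun a b => ¬ G.Adj a b

/-- The clique number of the subgraph of `G` induced on the vertex set `s`. -/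
noncomputable def cliqueNumOn (G : SimpleGraph V) (s : Finset V) : ℕ :=
  sSup {n | ∃ t : Finset V, t ⊆ s ∧ G.IsClique ↑t ∧ t.card = n}

/-- The independence number of the subgraph of `G` induced on the vertex set `s`. -/
noncomputable def indepNumOn (G : SimpleGraph V) (s : Finset V) : ℕ :=
  sSup {n | ∃ t : Finset V, t ⊆ s ∧ IsIndepSet' G ↑t ∧ t.card = n}

/-- `t` is a maximum clique of the subgraph of `G` induced on `s`. -/
def IsMaxCliqueOn (G : SimpleGraph V) (s t : Finset V) : Prop :=
  t ⊆ s ∧ G.IsClique ↑t ∧ t.card = cliqueNumOn G s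

/-- `t` is a maximum independent set of the subgraph of `G` induced on `s`. -/
def IsMaxIndepOn (G : SimpleGraph V) (s t : Finset V) : Prop :=
  t ⊆ s ∧ IsIndepSet' G ↑t ∧ t.card = indepNumOn G s

/-- The cycle `C_n` on vertices `0, …, n-1`, `i` adjacent to `i+1 (mod n)`. -/
def cyc (n : ℕ) : SimpleGraph (Fin n) :=
  SimpleGraph.fromRel (fun i j => j.val = (i.val + 1) % n)

/-- `C_n` together with one extra vertex `w` adjacent exactly to the two
consecutive cycle vertices `k` and `k+1 (mod n)`. -/
def cycPlus (n : ℕ) (k : Fin n) : SimpleGraph (Fin n ⊕ Unit) :=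
  SimpleGraph.fromRel (fun a b => match a, b with
    | Sum.inl i, Sum.inl j => j.val = (i.val + 1) % n
    | Sum.inr _, Sum.inl j => j = k ∨ j.val = (k.val + 1) % n
    | _, _ => False)

/-- `C_n` together with, for each edge `{v_i, v_{i+1}}`, a new vertex `w_i`
(coded `Sum.inr i`) adjacent exactly to `v_i` and `v_{i+1}`. -/
def cycAll (n : ℕ) : SimpleGraph (Fin n ⊕ Fin n) :=
  SimpleGraph.fromRel (fun a b => match a, b with
    | Sum.inl i, Sum.inl j => j.val = (i.val + 1) % n
    | Sum.inr i, Sum.inl j => j = i ∨ j.val = (i.val + 1) % n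
    | _, _ => False)

namespace Stmt12Aux
variable {n : ℕ}

lemma adj_ll (a b : Fin n) : (cycAll n).Adj (.inl a) (.inl b) ↔ a ≠ b ∧ (b.val = (a.val+1)%n ∨ a.val = (b.val+1)%n) := by
  simp [cycAll, SimpleGraph.fromRel_adj]
lemma adj_rl (i j : Fin n) : (cycAll n).Adj (.inr i) (.inl j) ↔ j = i ∨ j.val = (i.val+1)%n := by
  simp [cycAll, SimpleGraph.fromRel_adj]
lemma adj_rr (i j : Fin n) : ¬ (cycAll n).Adj (.inr i) (.inr j) := by
  simp [cycAll, SimpleGraph.fromRel_adj]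

lemma mod_succ (i : Fin n) :
    (i.val + 1) % n = if i.val + 1 = n then 0 else i.val + 1 := by
  have := i.isLt
  split
  · next h => rw [h, Nat.mod_self]
  · exact Nat.mod_eq_of_lt (by omega)

def fsucc (i : Fin n) : Fin n := ⟨(i.val+1)%n, Nat.mod_lt _ i.pos⟩

lemma no_tri (hn : 5 ≤ n) (a b c : Fin n) (hab : a ≠ b) (hac : a ≠ c) (hbc : b ≠ c)
    (h1 : b.val = (a.val+1)%n ∨ a.val = (b.val+1)%n)
    (h2 : c.val = (a.val+1)%n ∨ a.val = (c.val+1)%n)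
    (h3 : c.val = (b.val+1)%n ∨ b.val = (c.val+1)%n) : False := by
  have ha := a.isLt; have hb := b.isLt; have hc := c.isLt
  have hab' : a.val ≠ b.val := fun h => hab (Fin.ext h)
  have hac' : a.val ≠ c.val := fun h => hac (Fin.ext h)
  have hbc' : b.val ≠ c.val := fun h => hbc (Fin.ext h)
  rw [mod_succ a, mod_succ b, mod_succ c] at *
  split_ifs at h1 h2 h3 <;> omega

lemma clique_subset (i : Fin n) (t : Finset (Fin n ⊕ Fin n))
    (ht : (cycAll n).IsClique ↑t) (hi : Sum.inr i ∈ t) :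
    t ⊆ {Sum.inr i, Sum.inl i, Sum.inl (fsucc i)} := by
  intro x hx
  by_cases hxi : x = Sum.inr i
  · simp [hxi]
  · have hadj := ht (by exact_mod_cast hi) (by exact_mod_cast hx) (fun h => hxi h.symm)
    match x with
    | Sum.inr j => exact absurd hadj (adj_rr i j)
    | Sum.inl j =>
      rcases (adj_rl i j).mp hadj with h | h
      · simp [h]
      · have : j = fsucc i := Fin.ext h
        simp [this]

lemma clique_card_le (hn : 5 ≤ n) (t : Finset (Fin n ⊕ Fin n))
    (ht : (cycAll n).IsClique ↑t) : t.card ≤ 3 := by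
  by_cases hw : ∃ i, Sum.inr i ∈ t
  · obtain ⟨i, hi⟩ := hw
    calc t.card ≤ ({Sum.inr i, Sum.inl i, Sum.inl (fsucc i)} : Finset _).card :=
          Finset.card_le_card (clique_subset i t ht hi)
      _ ≤ 3 := Finset.card_insert_le _ _ |>.trans (by
          simpa using Nat.add_le_add_right (Finset.card_insert_le (Sum.inl i : Fin n ⊕ Fin n) {Sum.inl (fsucc i)}) 1)
  · push_neg at hw
    by_contra hcard
    push_neg at hcard
    obtain ⟨u, hu, hucard⟩ := Finset.exists_subset_card_eq (s := t) (n := 3) (by omega)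
    obtain ⟨a, b, c, hab, hac, hbc, rfl⟩ := Finset.card_eq_three.mp hucard
    have ha := hu (by simp : a ∈ _); have hb := hu (by simp : b ∈ _); have hc := hu (by simp : c ∈ _)
    obtain ⟨a', rfl⟩ : ∃ a', a = Sum.inl a' := by
      cases a with
      | inl a' => exact ⟨a', rfl⟩
      | inr a' => exact absurd ha (hw a')
    obtain ⟨b', rfl⟩ : ∃ b', b = Sum.inl b' := by
      cases b with
      | inl b' => exact ⟨b', rfl⟩
      | inr b' => exact absurd hb (hw b')
    obtain ⟨c', rfl⟩ : ∃ c', c = Sum.inl c' := by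
      cases c with
      | inl c' => exact ⟨c', rfl⟩
      | inr c' => exact absurd hc (hw c')
    have h1 := (adj_ll a' b').mp (ht (by exact_mod_cast ha) (by exact_mod_cast hb) hab)
    have h2 := (adj_ll a' c').mp (ht (by exact_mod_cast ha) (by exact_mod_cast hc) hac)
    have h3 := (adj_ll b' c').mp (ht (by exact_mod_cast hb) (by exact_mod_cast hc) hbc)
    exact no_tri hn a' b' c' h1.1 h2.1 h3.1 h1.2 h2.2 h3.2

lemma fsucc_ne (hn : 5 ≤ n) (i : Fin n) : i ≠ fsucc i := by
  intro h
  have h2 : i.val = (i.val+1)%n := congrArg Fin.val h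
  have hi := i.isLt
  rw [mod_succ i] at h2
  split_ifs at h2 <;> omega

def tri (i : Fin n) : Finset (Fin n ⊕ Fin n) := {Sum.inr i, Sum.inl i, Sum.inl (fsucc i)}

lemma tri_card (hn : 5 ≤ n) (i : Fin n) : (tri i).card = 3 := by
  rw [tri, Finset.card_insert_of_notMem (by simp), Finset.card_insert_of_notMem (by
    simp [Fin.ext_iff]; exact fun h => (fsucc_ne hn i) (Fin.ext h)), Finset.card_singleton]

lemma tri_clique (hn : 5 ≤ n) (i : Fin n) : (cycAll n).IsClique ↑(tri i) := by
  intro x hx y hy hxy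
  simp [tri] at hx hy
  have h1 : (cycAll n).Adj (.inr i) (.inl i) := (adj_rl i i).mpr (Or.inl rfl)
  have h2 : (cycAll n).Adj (.inr i) (.inl (fsucc i)) := (adj_rl i _).mpr (Or.inr rfl)
  have h3 : (cycAll n).Adj (.inl i) (.inl (fsucc i)) := (adj_ll i _).mpr ⟨fsucc_ne hn i, Or.inl rfl⟩
  rcases hx with rfl | rfl | rfl <;> rcases hy with rfl | rfl | rfl <;>
    first
    | exact absurd rfl hxy
    | exact h1 | exact h2 | exact h3 | exact h1.symm | exact h2.symm | exact h3.symm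
    | (exfalso; exact hxy (by simp [Sum.inl.injEq]))

lemma cliqueNumOn_eq (hn : 5 ≤ n) : cliqueNumOn (cycAll n) Finset.univ = 3 := by
  have hbdd : BddAbove {k | ∃ t : Finset (Fin n ⊕ Fin n), t ⊆ Finset.univ ∧ (cycAll n).IsClique ↑t ∧ t.card = k} := by
    refine ⟨3, ?_⟩
    rintro k ⟨t, -, ht, rfl⟩
    exact clique_card_le hn t ht
  apply le_antisymm
  · have hmem : (0:ℕ) ∈ {k | ∃ t : Finset (Fin n ⊕ Fin n), t ⊆ Finset.univ ∧ (cycAll n).IsClique ↑t ∧ t.card = k} := ⟨∅, by simp, by simp, rfl⟩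
    apply csSup_le ⟨0, hmem⟩
    rintro k ⟨t, -, ht, rfl⟩
    exact clique_card_le hn t ht
  · exact le_csSup hbdd ⟨tri ⟨0, by omega⟩, Finset.subset_univ _, tri_clique hn _, tri_card hn _⟩

lemma maxclique_form (hn : 5 ≤ n) (t : Finset (Fin n ⊕ Fin n))
    (hcl : (cycAll n).IsClique ↑t) (hcard : t.card = 3) : ∃ i, t = tri i := by
  by_cases hw : ∃ i, Sum.inr i ∈ t
  · obtain ⟨i, hi⟩ := hw
    refine ⟨i, Finset.eq_of_subset_of_card_le (clique_subset i t hcl hi) ?_⟩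
    rw [tri_card hn, hcard]
  · exfalso
    push_neg at hw
    obtain ⟨a, b, c, hab, hac, hbc, rfl⟩ := Finset.card_eq_three.mp hcard
    have ha : a ∈ ({a,b,c} : Finset _) := by simp
    have hb : b ∈ ({a,b,c} : Finset _) := by simp
    have hc : c ∈ ({a,b,c} : Finset _) := by simp
    obtain ⟨a', rfl⟩ : ∃ a', a = Sum.inl a' := by
      cases a with
      | inl a' => exact ⟨a', rfl⟩
      | inr a' => exact absurd ha (hw a')
    obtain ⟨b', rfl⟩ : ∃ b', b = Sum.inl b' := by
      cases b with
      | inl b' => exact ⟨b', rfl⟩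
      | inr b' => exact absurd hb (hw b')
    obtain ⟨c', rfl⟩ : ∃ c', c = Sum.inl c' := by
      cases c with
      | inl c' => exact ⟨c', rfl⟩
      | inr c' => exact absurd hc (hw c')
    have h1 := (adj_ll a' b').mp (hcl (by exact_mod_cast ha) (by exact_mod_cast hb) hab)
    have h2 := (adj_ll a' c').mp (hcl (by exact_mod_cast ha) (by exact_mod_cast hc) hac)
    have h3 := (adj_ll b' c').mp (hcl (by exact_mod_cast hb) (by exact_mod_cast hc) hbc)
    exact no_tri hn a' b' c' h1.1 h2.1 h3.1 h1.2 h2.2 h3.2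

end Stmt12Aux

theorem stmt_12 (n m : ℕ) (hm : n = 2 * m + 1) (hn : 5 ≤ n)
    (S : Finset (Fin n ⊕ Fin n))
    (hS : S = insert (Sum.inr ⟨n - 1, by omega⟩)
      ((Finset.univ.filter fun j : Fin n => j.val % 2 = 1).image Sum.inl)) :
    IsIndepSet' (cycAll n) ↑S ∧
      (∀ t, IsMaxCliqueOn (cycAll n) Finset.univ t → (S ∩ t).Nonempty) ∧
      ∀ v ∈ S, ∃ t, IsMaxCliqueOn (cycAll n) Finset.univ t ∧ v ∈ t := by
  have hodd : n % 2 = 1 := by omega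
  have hmax : ∀ i : Fin n, IsMaxCliqueOn (cycAll n) Finset.univ (Stmt12Aux.tri i) :=
    fun i => ⟨Finset.subset_univ _, Stmt12Aux.tri_clique hn i,
      by rw [Stmt12Aux.tri_card hn, Stmt12Aux.cliqueNumOn_eq hn]⟩
  refine ⟨?_, ?_, ?_⟩
  · intro x hx y hy hne hadj
    simp only [hS, Finset.coe_insert, Set.mem_insert_iff, Finset.coe_image, Set.mem_image,
      Finset.mem_coe, Finset.mem_filter, Finset.mem_univ, true_and] at hx hy
    have key : ∀ k : Fin n, k.val % 2 = 1 → ¬ (cycAll n).Adj (Sum.inr ⟨n-1, by omega⟩) (Sum.inl k) := by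
      intro k hk hadj
      have hklt := k.isLt
      rcases (Stmt12Aux.adj_rl _ k).mp hadj with h | h
      · have h' : k.val = n - 1 := congrArg Fin.val h
        omega
      · have h' : k.val = (n - 1 + 1) % n := h
        have hz : (n - 1 + 1) % n = 0 := by
          have : n - 1 + 1 = n := by omega
          rw [this, Nat.mod_self]
        omega
    rcases hx with rfl | ⟨j, hj, rfl⟩ <;> rcases hy with rfl | ⟨k, hk, rfl⟩
    · exact hne rfl
    · exact key k hk hadj
    · exact key j hj hadj.symm
    · obtain ⟨-, h | h⟩ := (Stmt12Aux.adj_ll j k).mp hadj <;>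
        [rw [Stmt12Aux.mod_succ j] at h; rw [Stmt12Aux.mod_succ k] at h] <;>
        have := j.isLt <;> have := k.isLt <;> split_ifs at h <;> omega
  · intro t ht
    obtain ⟨i, rfl⟩ := Stmt12Aux.maxclique_form hn t ht.2.1
      (by rw [ht.2.2, Stmt12Aux.cliqueNumOn_eq hn])
    have hi := i.isLt
    by_cases h1 : i.val % 2 = 1
    · refine ⟨Sum.inl i, Finset.mem_inter.mpr ⟨?_, by simp [Stmt12Aux.tri]⟩⟩
      simp only [hS, Finset.mem_insert, Finset.mem_image, Finset.mem_filter, Finset.mem_univ,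
        true_and]
      exact Or.inr ⟨i, h1, rfl⟩
    · by_cases h2 : i.val = n - 1
      · refine ⟨Sum.inr i, Finset.mem_inter.mpr ⟨?_, by simp [Stmt12Aux.tri]⟩⟩
        simp only [hS, Finset.mem_insert]
        exact Or.inl (by rw [show i = (⟨n-1, by omega⟩ : Fin n) from Fin.ext h2])
      · refine ⟨Sum.inl (Stmt12Aux.fsucc i), Finset.mem_inter.mpr ⟨?_, by simp [Stmt12Aux.tri]⟩⟩
        simp only [hS, Finset.mem_insert, Finset.mem_image, Finset.mem_filter, Finset.mem_univ,
          true_and]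
        refine Or.inr ⟨Stmt12Aux.fsucc i, ?_, rfl⟩
        show (i.val + 1) % n % 2 = 1
        rw [Stmt12Aux.mod_succ i]
        split_ifs <;> omega
  · intro v hv
    simp only [hS, Finset.mem_insert, Finset.mem_image, Finset.mem_filter, Finset.mem_univ,
      true_and] at hv
    rcases hv with rfl | ⟨j, hj, rfl⟩
    · exact ⟨Stmt12Aux.tri ⟨n-1, by omega⟩, hmax _, by simp [Stmt12Aux.tri]⟩
    · exact ⟨Stmt12Aux.tri j, hmax j, by simp [Stmt12Aux.tri]⟩
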